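/- If there exists a down-link from a (K_v,Γ)-design to a (K_n,P₃)-design, then n > (v-1)·sqrt(2/|E(Γ)|); equivalently, (v-1)·sqrt(|E(Γ')|/|E(Γ)|) < n where Γ' = P₃ has 2 edges. -/

import Mathlib

open SimpleGraph

/-- The complete graph on the set `s` of natural numbers, viewed as a graph on `ℕ`. -/
def Kon (s : Set ℕ) : SimpleGraph ℕ where
  Adj x y := x ≠ y ∧ x ∈ s ∧ y ∈ s
  symm := ⟨fun x y ⟨h, hx, hy⟩ => ⟨h.symm, hy, hx⟩⟩
  loopless := ⟨fun x h => h.1 rfl⟩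

/-- `B` is a copy of `Γ`: there is an injection of vertices under which the
edges of `B` are exactly the images of the edges of `Γ`. -/
def IsCopy {α β : Type*} (Γ : SimpleGraph α) (B : SimpleGraph β) : Prop :=
  ∃ φ : α ↪ β, ∀ x y : β, B.Adj x y ↔ ∃ a b, Γ.Adj a b ∧ φ a = x ∧ φ b = y

/-- A `(G, Γ)`-design: a set of copies of `Γ`, each a subgraph of `G` with
nonempty edge set, whose edge sets partition the edge set of `G`. -/
def IsDesign {α β : Type*} (G : SimpleGraph β) (Γ : SimpleGraph α)
    (D : Set (SimpleGraph β)) : Prop :=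
  (∀ B ∈ D, B ≤ G ∧ IsCopy Γ B ∧ B.edgeSet.Nonempty) ∧
  ∀ e ∈ G.edgeSet, ∃! B, B ∈ D ∧ e ∈ B.edgeSet

/-- A down-link from the design `D` to the design `D'`: each block is mapped
to a subgraph of itself. -/
def IsDownlink {β : Type*} (D D' : Set (SimpleGraph β))
    (f : SimpleGraph β → SimpleGraph β) : Prop :=
  ∀ B ∈ D, f B ∈ D' ∧ f B ≤ B

lemma copy_edgeSet {α β : Type*} {Γ : SimpleGraph α} {B : SimpleGraph β}
    (h : IsCopy Γ B) : ∃ φ : α ↪ β, B.edgeSet = Sym2.map φ '' Γ.edgeSet := by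
  obtain ⟨φ, hφ⟩ := h
  refine ⟨φ, ?_⟩
  ext e
  induction e with
  | _ x y =>
    simp only [mem_edgeSet, hφ, Set.mem_image]
    constructor
    · rintro ⟨a, b, hab, rfl, rfl⟩
      exact ⟨s(a, b), hab, rfl⟩
    · rintro ⟨e', he', hmap⟩
      induction e' with
      | _ a b =>
        simp only [Sym2.map_pair_eq, Sym2.eq, Sym2.rel_iff', Prod.mk.injEq,
          Prod.swap_prod_mk] at hmap
        rcases hmap with ⟨rfl, rfl⟩ | ⟨rfl, rfl⟩
        · exact ⟨a, b, he', rfl, rfl⟩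
        · exact ⟨b, a, ((mem_edgeSet Γ).mp he').symm, rfl, rfl⟩

lemma copy_ncard {α β : Type*} {Γ : SimpleGraph α} {B : SimpleGraph β}
    (h : IsCopy Γ B) (hΓ : Γ.edgeSet.Finite) :
    B.edgeSet.ncard = Γ.edgeSet.ncard ∧ B.edgeSet.Finite := by
  obtain ⟨φ, hφ⟩ := copy_edgeSet h
  rw [hφ]
  exact ⟨Set.ncard_image_of_injective _ (Sym2.map.injective φ.injective),
    hΓ.image _⟩

/-- Abstract counting lemma for designs. -/
lemma design_count {β : Type*} {G : SimpleGraph β} {D : Set (SimpleGraph β)} {c : ℕ}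
    (hG : G.edgeSet.Finite)
    (hsub : ∀ B ∈ D, B.edgeSet ⊆ G.edgeSet)
    (hcard : ∀ B ∈ D, B.edgeSet.ncard = c ∧ B.edgeSet.Finite)
    (hne : ∀ B ∈ D, B.edgeSet.Nonempty)
    (huniq : ∀ e ∈ G.edgeSet, ∃! B, B ∈ D ∧ e ∈ B.edgeSet) :
    D.Finite ∧ G.edgeSet.ncard = c * D.ncard := by
  classical
  have hDfin : D.Finite := by
    have hch : ∀ B : D, ∃ e, e ∈ G.edgeSet ∧ e ∈ (B : SimpleGraph β).edgeSet := by
      rintro ⟨B, hB⟩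
      obtain ⟨e, he⟩ := hne B hB
      exact ⟨e, hsub B hB he, he⟩
    choose g hg1 hg2 using hch
    have hginj : Function.Injective g := by
      rintro ⟨B₁, h₁⟩ ⟨B₂, h₂⟩ hgeq
      have he1 := hg2 ⟨B₁, h₁⟩
      have he2 := hg2 ⟨B₂, h₂⟩
      rw [hgeq] at he1
      obtain ⟨Bu, _, hu⟩ := huniq _ (hg1 ⟨B₂, h₂⟩)
      exact Subtype.ext ((hu B₁ ⟨h₁, he1⟩).trans (hu B₂ ⟨h₂, he2⟩).symm)
    have : Finite ↥G.edgeSet := hG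
    have : Finite ↥D :=
      Finite.of_injective (fun B => (⟨g B, hg1 B⟩ : G.edgeSet))
        (fun a b h => hginj (congrArg Subtype.val h))
    exact Set.finite_coe_iff.mp this
  refine ⟨hDfin, ?_⟩
  set DF := hDfin.toFinset with hDF
  set t : SimpleGraph β → Finset (Sym2 β) :=
    fun B => hG.toFinset.filter (· ∈ B.edgeSet) with htdef
  have ht : ∀ B ∈ D, (t B : Set (Sym2 β)) = B.edgeSet := by
    intro B hB
    ext e
    simp only [htdef, Finset.coe_filter, Set.Finite.mem_toFinset, Set.mem_setOf_eq]
    exact ⟨fun h => h.2, fun h => ⟨hsub B hB h, h⟩⟩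
  have htcard : ∀ B ∈ DF, (t B).card = c := by
    intro B hB
    rw [hDF, Set.Finite.mem_toFinset] at hB
    rw [← Set.ncard_coe_finset, ht B hB]
    exact (hcard B hB).1
  have hunion : hG.toFinset = DF.biUnion t := by
    ext e
    simp only [Set.Finite.mem_toFinset, Finset.mem_biUnion, htdef,
      Finset.mem_filter, hDF]
    constructor
    · intro heG
      obtain ⟨B, ⟨hB, heB⟩, _⟩ := huniq e heG
      exact ⟨B, hB, heG, heB⟩
    · rintro ⟨B, _, heG, _⟩
      exact heG
  have hdisj : ∀ B₁ ∈ DF, ∀ B₂ ∈ DF, B₁ ≠ B₂ → Disjoint (t B₁) (t B₂) := by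
    intro B₁ h₁ B₂ h₂ hne12
    rw [hDF, Set.Finite.mem_toFinset] at h₁ h₂
    rw [Finset.disjoint_left]
    intro e he1 he2
    simp only [htdef, Finset.mem_filter, Set.Finite.mem_toFinset] at he1 he2
    obtain ⟨Bu, _, hu⟩ := huniq e he1.1
    exact hne12 ((hu B₁ ⟨h₁, he1.2⟩).trans (hu B₂ ⟨h₂, he2.2⟩).symm)
  rw [Set.ncard_eq_toFinset_card _ hG, Set.ncard_eq_toFinset_card _ hDfin,
    hunion, Finset.card_biUnion hdisj, Finset.sum_congr rfl htcard,
    Finset.sum_const, smul_eq_mul, mul_comm]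

/-- `Kon (Set.Iio v)` is a copy of the complete graph on `Fin v`. -/
lemma kon_isCopy (v : ℕ) : IsCopy (⊤ : SimpleGraph (Fin v)) (Kon (Set.Iio v)) := by
  refine ⟨⟨Fin.val, Fin.val_injective⟩, fun x y => ?_⟩
  change (x ≠ y ∧ x ∈ Set.Iio v ∧ y ∈ Set.Iio v) ↔ _
  constructor
  · rintro ⟨hxy, hx, hy⟩
    refine ⟨⟨x, hx⟩, ⟨y, hy⟩, ?_, rfl, rfl⟩
    simp only [top_adj, ne_eq, Fin.mk.injEq]
    exact fun h => hxy (congrArg Fin.val h)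
  · rintro ⟨a, b, hab, rfl, rfl⟩
    exact ⟨fun h => hab.ne (Fin.val_injective h), a.isLt, b.isLt⟩

lemma kon_ncard (v : ℕ) :
    (Kon (Set.Iio v)).edgeSet.ncard = v.choose 2 ∧ (Kon (Set.Iio v)).edgeSet.Finite := by
  have h := copy_ncard (kon_isCopy v) (Set.toFinite _)
  refine ⟨?_, h.2⟩
  rw [h.1, ← coe_edgeFinset, Set.ncard_coe_finset,
    card_edgeFinset_top_eq_card_choose_two, Fintype.card_fin]

lemma pathGraph3_edgeSet : (pathGraph 3).edgeSet = {s(0, 1), s(1, 2)} := by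
  ext e
  induction e with
  | _ x y =>
    simp only [mem_edgeSet, pathGraph_adj, Set.mem_insert_iff, Set.mem_singleton_iff,
      Sym2.eq, Sym2.rel_iff', Prod.mk.injEq, Prod.swap_prod_mk]
    fin_cases x <;> fin_cases y <;> simp

lemma pathGraph3_ncard : (pathGraph 3).edgeSet.ncard = 2 := by
  rw [pathGraph3_edgeSet, Set.ncard_pair (by decide)]

/-- Counting bound: a down-link from a `(K_v,Γ)`-design to a `(K_n,P₃)`-design
forces `(v-1)·√(2/|E(Γ)|) < n`. -/
theorem stmt4 {α : Type*} [Fintype α] (Γ : SimpleGraph α) [DecidableRel Γ.Adj]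
    (v n : ℕ) (hv : 2 ≤ v) (D D' : Set (SimpleGraph ℕ))
    (hD : IsDesign (Kon (Set.Iio v)) Γ D)
    (hD' : IsDesign (Kon (Set.Iio n)) (pathGraph 3) D')
    (f : SimpleGraph ℕ → SimpleGraph ℕ) (hf : IsDownlink D D' f) :
    ((v : ℝ) - 1) * Real.sqrt (2 / (Γ.edgeFinset.card : ℝ)) < n := by
  classical
  set e := Γ.edgeFinset.card with he
  have hΓe : Γ.edgeSet.ncard = e := by
    rw [he, ← Set.ncard_coe_finset, coe_edgeFinset]
  -- counting for D
  obtain ⟨hKv, hKvfin⟩ := kon_ncard v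
  obtain ⟨hKn, hKnfin⟩ := kon_ncard n
  obtain ⟨hDfin, hDcount⟩ :=
    design_count (c := e) hKvfin
      (fun B hB => edgeSet_mono (hD.1 B hB).1)
      (fun B hB => by
        have := copy_ncard (hD.1 B hB).2.1 (Set.toFinite _)
        rw [hΓe] at this; exact this)
      (fun B hB => (hD.1 B hB).2.2) hD.2
  obtain ⟨hD'fin, hD'count⟩ :=
    design_count (c := 2) hKnfin
      (fun B hB => edgeSet_mono (hD'.1 B hB).1)
      (fun B hB => by
        have := copy_ncard (hD'.1 B hB).2.1 (Set.toFinite _)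
        rw [pathGraph3_ncard] at this; exact this)
      (fun B hB => (hD'.1 B hB).2.2) hD'.2
  rw [hKv] at hDcount
  rw [hKn] at hD'count
  -- D is nonempty, so e ≥ 1 and D.ncard ≥ 1
  have hedge : s(0, 1) ∈ (Kon (Set.Iio v)).edgeSet := by
    simp only [mem_edgeSet]
    change (0:ℕ) ≠ 1 ∧ (0:ℕ) ∈ Set.Iio v ∧ (1:ℕ) ∈ Set.Iio v
    exact ⟨by omega, by simpa using by omega, by simpa using by omega⟩
  obtain ⟨B₀, ⟨hB₀D, _⟩, _⟩ := hD.2 _ hedge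
  have hDpos : 1 ≤ D.ncard := by
    rw [Nat.one_le_iff_ne_zero, Ne, Set.ncard_eq_zero hDfin]
    exact fun h => Set.notMem_empty B₀ (h ▸ hB₀D)
  have hepos : 1 ≤ e := by
    obtain ⟨hBc, hBfin⟩ := copy_ncard (hD.1 B₀ hB₀D).2.1 (Set.toFinite _)
    have := (hD.1 B₀ hB₀D).2.2
    rw [← Set.ncard_pos hBfin, hBc, hΓe] at this
    omega
  -- injectivity of f on D
  have hinj : Set.InjOn f D := by
    intro B₁ h₁ B₂ h₂ hfeq
    obtain ⟨e₀, he₀⟩ := (hD'.1 _ (hf B₁ h₁).1).2.2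
    have he₀1 : e₀ ∈ B₁.edgeSet := edgeSet_mono (hf B₁ h₁).2 he₀
    have he₀2 : e₀ ∈ B₂.edgeSet := edgeSet_mono (hf B₂ h₂).2 (hfeq ▸ he₀)
    obtain ⟨Bu, _, hu⟩ := hD.2 e₀ (edgeSet_mono (hD.1 B₁ h₁).1 he₀1)
    exact (hu B₁ ⟨h₁, he₀1⟩).trans (hu B₂ ⟨h₂, he₀2⟩).symm
  have hle : D.ncard ≤ D'.ncard := by
    rw [← Set.ncard_image_of_injOn hinj]
    exact Set.ncard_le_ncard (fun _ ⟨B, hB, hfB⟩ => hfB ▸ (hf B hB).1) hD'fin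
  -- key inequality in ℕ
  have hkey : 2 * v.choose 2 ≤ e * n.choose 2 := by
    calc 2 * v.choose 2 = 2 * (e * D.ncard) := by rw [hDcount]
    _ = e * (2 * D.ncard) := by ring
    _ ≤ e * (2 * D'.ncard) := by
        exact Nat.mul_le_mul_left _ (Nat.mul_le_mul_left _ hle)
    _ = e * n.choose 2 := by rw [hD'count]
  -- n ≥ 1
  have hnpos : 1 ≤ n := by
    by_contra h
    push_neg at h
    interval_cases n
    simp at hD'count
    omega
  -- pass to ℝ
  have hkeyR : 2 * ((v : ℝ) * ((v : ℝ) - 1) / 2) ≤ (e : ℝ) * ((n : ℝ) * ((n : ℝ) - 1) / 2) := by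
    have := hkey
    have h2 : ((2 * v.choose 2 : ℕ) : ℝ) ≤ ((e * n.choose 2 : ℕ) : ℝ) := by
      exact_mod_cast this
    rwa [Nat.cast_mul, Nat.cast_mul, Nat.cast_choose_two, Nat.cast_choose_two] at h2
  have heR : (1 : ℝ) ≤ (e : ℝ) := by exact_mod_cast hepos
  have hvR : (2 : ℝ) ≤ (v : ℝ) := by exact_mod_cast hv
  have hnR : (1 : ℝ) ≤ (n : ℝ) := by exact_mod_cast hnpos
  have hfrac : 0 ≤ 2 / (e : ℝ) := by positivity
  rw [show ((v : ℝ) - 1) * Real.sqrt (2 / (e : ℝ))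
      = Real.sqrt (((v : ℝ) - 1) ^ 2 * (2 / (e : ℝ))) by
    rw [Real.sqrt_mul (sq_nonneg _), Real.sqrt_sq (by linarith)]]
  rw [Real.sqrt_lt' (by linarith : (0 : ℝ) < (n : ℝ)),
    show ((v : ℝ) - 1) ^ 2 * (2 / (e : ℝ)) = ((v : ℝ) - 1) ^ 2 * 2 / (e : ℝ) by ring,
    div_lt_iff₀ (by linarith : (0 : ℝ) < (e : ℝ))]
  nlinarith [hkeyR, heR, hvR, hnR,
    mul_nonneg (le_trans zero_le_one heR) (le_trans zero_le_one hnR)]
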